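/- For |z| < 1 the error of the m-point trapezoidal discretization of the Cauchy integral for the constant function 1 decays exponentially: |(1/m) ∑_{k=0}^{m−1} ζᵏ/(ζᵏ − z) − 1| ≤ |z|^m / (1 − |z|^m), where ζᵏ = e^{2πik/m}. -/

import Mathlib

open Complex Finset

theorem trap_key (m : ℕ) (hm : 1 ≤ m) (z : ℂ) (hz : ‖z‖ < 1) :
    (∑ k ∈ Finset.range m,
      Complex.exp (2 * Real.pi * I * k / m) /
        (Complex.exp (2 * Real.pi * I * k / m) - z)) = m / (1 - z ^ m) := by
  have hm0 : (m : ℂ) ≠ 0 := Nat.cast_ne_zero.mpr (by omega)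
  set ω : ℂ := Complex.exp (2 * Real.pi * I / m) with hω
  have hωm : ω ^ m = 1 := by
    rw [hω, ← Complex.exp_nat_mul]
    rw [mul_div_cancel₀ _ hm0]
    simpa [mul_comm] using Complex.exp_two_pi_mul_I
  have hterm : ∀ k : ℕ, Complex.exp (2 * Real.pi * I * k / m) = ω ^ k := by
    intro k
    rw [hω, ← Complex.exp_nat_mul]
    ring_nf
  have habs : ∀ k : ℕ, ‖ω ^ k‖ = 1 := by
    have h1 := congrArg norm hωm
    rw [norm_pow, norm_one] at h1
    have hω1 : ‖ω‖ = 1 := by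
      have h0 := norm_nonneg ω
      by_contra hne
      rcases lt_or_gt_of_ne hne with h | h
      · have := pow_lt_one₀ h0 h (by omega : m ≠ 0); linarith
      · have := one_lt_pow₀ (n := m) h (by omega); linarith
    intro k; rw [norm_pow, hω1, one_pow]
  have hne : ∀ k : ℕ, ω ^ k - z ≠ 0 := by
    intro k h
    have : ω ^ k = z := by linear_combination h
    rw [← this, habs k] at hz; linarith
  have hzm : ‖z ^ m‖ < 1 := by
    rw [norm_pow]; exact pow_lt_one₀ (norm_nonneg z) hz (by omega)
  have h1zm : (1 : ℂ) - z ^ m ≠ 0 := by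
    intro h
    have : z ^ m = 1 := by linear_combination -h
    rw [this] at hzm; simp at hzm
  simp only [hterm]
  rw [eq_div_iff h1zm, Finset.sum_mul]
  have hterm2 : ∀ k ∈ Finset.range m,
      ω ^ k / (ω ^ k - z) * (1 - z ^ m) = ∑ j ∈ Finset.range m, (ω ^ (j+1)) ^ k * z ^ (m - 1 - j) := by
    intro k _
    rw [div_mul_eq_mul_div, div_eq_iff (hne k)]
    have h1 : (1 : ℂ) - z ^ m = (ω ^ k) ^ m - z ^ m := by
      rw [← pow_mul, mul_comm, pow_mul, hωm, one_pow]
    rw [h1, ← geom_sum₂_mul (ω ^ k) z m, Finset.sum_mul, Finset.mul_sum, Finset.sum_mul]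
    exact Finset.sum_congr rfl fun j _ => by ring
  rw [Finset.sum_congr rfl hterm2, Finset.sum_comm]
  have hsum : ∀ j ∈ Finset.range m,
      ∑ k ∈ Finset.range m, (ω ^ (j+1)) ^ k * z ^ (m - 1 - j)
        = if j = m - 1 then (m : ℂ) else 0 := by
    intro j hj
    rw [← Finset.sum_mul]
    rw [Finset.mem_range] at hj
    by_cases hjm : j = m - 1
    · subst hjm
      have h2 : ω ^ (m - 1 + 1) = 1 := by rw [Nat.sub_add_cancel hm, hωm]
      simp [h2, Nat.sub_self]
    · have hj1 : j + 1 < m := by omega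
      have hω1 : ω ^ (j+1) ≠ 1 := by
        intro h
        rw [hω, ← Complex.exp_nat_mul, Complex.exp_eq_one_iff] at h
        obtain ⟨n, hn⟩ := h
        have h2 : (2:ℂ) * Real.pi * I ≠ 0 := by
          refine mul_ne_zero (mul_ne_zero two_ne_zero ?_) I_ne_zero
          exact_mod_cast Real.pi_ne_zero
        have hc : ((j:ℂ) + 1) = n * m := by
          field_simp at hn
          push_cast at hn
          linear_combination hn
        have hc' : (j:ℤ) + 1 = n * m := by exact_mod_cast hc
        have hm' : (1:ℤ) ≤ m := by exact_mod_cast hm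
        have hj1' : (j:ℤ) + 1 < m := by exact_mod_cast hj1
        rcases le_or_gt n 0 with h' | h'
        · nlinarith
        · have : (m:ℤ) ≤ n * m := le_mul_of_one_le_left (by linarith) (by linarith)
          linarith
      rw [geom_sum_eq hω1]
      have h3 : (ω ^ (j+1)) ^ m = 1 := by rw [← pow_mul, mul_comm, pow_mul, hωm, one_pow]
      rw [h3]
      simp [if_neg hjm]
  rw [Finset.sum_congr rfl hsum, Finset.sum_ite_eq' (Finset.range m) (m-1)]
  simp [Finset.mem_range, Nat.sub_lt (by omega : 0 < m)]

theorem trapezoidal_cauchy_exponential_error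
    (m : ℕ) (hm : 1 ≤ m) (z : ℂ) (hz : ‖z‖ < 1) :
    ‖((1 / (m : ℂ)) *
            (∑ k ∈ Finset.range m,
              Complex.exp (2 * Real.pi * I * k / m) /
                (Complex.exp (2 * Real.pi * I * k / m) - z)) - 1)‖ ≤
      ‖z‖ ^ m / (1 - ‖z‖ ^ m) := by
  have hm0 : (m : ℂ) ≠ 0 := Nat.cast_ne_zero.mpr (by omega)
  have hzm : ‖z‖ ^ m < 1 := pow_lt_one₀ (norm_nonneg z) hz (by omega)
  have h1zm : (1 : ℂ) - z ^ m ≠ 0 := by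
    intro h
    have h2 : ‖z ^ m‖ = 1 := by
      have h3 : z ^ m = 1 := by linear_combination -h
      simp [h3]
    rw [norm_pow] at h2; linarith
  rw [trap_key m hm z hz]
  have he : (1 / (m : ℂ)) * ((m : ℂ) / (1 - z ^ m)) - 1 = z ^ m / (1 - z ^ m) := by
    field_simp
    ring
  rw [he, norm_div, norm_pow]
  have hden : 1 - ‖z‖ ^ m ≤ ‖1 - z ^ m‖ := by
    have := abs_norm_sub_norm_le (1 : ℂ) (z ^ m)
    have h4 : ‖(1 : ℂ)‖ - ‖z ^ m‖ ≤ ‖1 - z ^ m‖ :=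
      le_trans (le_abs_self _) this
    rwa [norm_one, norm_pow] at h4
  have hpos : 0 < 1 - ‖z‖ ^ m := by linarith
  gcongr
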